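/- Let n,m ≥ 1, let a,b be integers with 0 ≤ a ≤ n, 0 ≤ b ≤ m, and suppose (without loss of generality) am ≥ bn. Then the minimum cardinality of a set A ⊆ [0,n-1]×[0,m-1] such that every point (j,i) ∉ A has at least a points of A in its row (other points with second coordinate i) and at least b points of A in its column (other points with first coordinate j) equals max(am, bn). -/

import Mathlib

open Finset

private lemma key_inj_le {n a s s' : ℕ} (ha : a ≤ n) (hapos : 0 < a)
    (h1 : s % n = s' % n) (h2 : s / a = s' / a) (hle : s ≤ s') : s = s' := by
  have e1 := Nat.div_add_mod s a
  have e2 := Nat.div_add_mod s' a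
  have m1 := Nat.mod_lt s hapos
  have m2 := Nat.mod_lt s' hapos
  rw [h2] at e1
  have h3 : s' - s < a := by omega
  have hdvd : n ∣ s' - s := (Nat.modEq_iff_dvd' hle).mp h1
  have := Nat.eq_zero_of_dvd_of_lt hdvd (lt_of_lt_of_le h3 ha)
  omega

private lemma key_inj {n a s s' : ℕ} (ha : a ≤ n) (hapos : 0 < a)
    (h1 : s % n = s' % n) (h2 : s / a = s' / a) : s = s' := by
  rcases le_total s s' with h | h
  · exact key_inj_le ha hapos h1 h2 h
  · exact (key_inj_le ha hapos h1.symm h2.symm h).symm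

private lemma count_res (n b N j : ℕ) (hj : j < n) (hbn : b * n ≤ N) :
    b ≤ ((range N).filter (fun s => s % n = j)).card := by
  have hinj : Function.Injective (fun t => j + n * t) := by
    intro t t' h
    simp only at h
    have : n * t = n * t' := by omega
    exact Nat.eq_of_mul_eq_mul_left (by omega) this
  have hsub : ((range b).image (fun t => j + n * t)) ⊆
      (range N).filter (fun s => s % n = j) := by
    intro x hx
    simp only [mem_image, mem_range] at hx
    obtain ⟨t, ht, rfl⟩ := hx
    simp only [mem_filter, mem_range]
    constructor
    · have h1 : n * (t + 1) ≤ n * b := Nat.mul_le_mul_left n (by omega)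
      have h2 : n * (t + 1) = n * t + n := by ring
      have h3 : n * b = b * n := by ring
      omega
    · rw [Nat.add_mul_mod_self_left, Nat.mod_eq_of_lt hj]
  calc b = ((range b).image (fun t => j + n * t)).card := by
        rw [Finset.card_image_of_injective _ hinj, card_range]
    _ ≤ _ := card_le_card hsub

/-- the Young domination number for the L-shaped zero-set `V_{a,b}`:
the minimum size of `A ⊆ [0,n-1]×[0,m-1]` such that every point `(j,i) ∉ A` has at
least `a` points of `A` in its row and at least `b` points of `A` in its column
equals `max(am, bn)` (assuming `am ≥ bn`). -/
theorem stmt_4 (n m a b : ℕ) (hn : 1 ≤ n) (hm : 1 ≤ m)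
    (han : a ≤ n) (hbm : b ≤ m) (hwlog : b * n ≤ a * m) :
    sInf {k : ℕ | ∃ A : Finset (ℕ × ℕ), A ⊆ Finset.range n ×ˢ Finset.range m ∧
      A.card = k ∧
      ∀ p ∈ Finset.range n ×ˢ Finset.range m, p ∉ A →
        a ≤ (A.filter (fun q => q.2 = p.2 ∧ q.1 ≠ p.1)).card ∧
        b ≤ (A.filter (fun q => q.1 = p.1 ∧ q.2 ≠ p.2)).card} =
    max (a * m) (b * n) := by
  set S := {k : ℕ | ∃ A : Finset (ℕ × ℕ), A ⊆ Finset.range n ×ˢ Finset.range m ∧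
      A.card = k ∧
      ∀ p ∈ Finset.range n ×ˢ Finset.range m, p ∉ A →
        a ≤ (A.filter (fun q => q.2 = p.2 ∧ q.1 ≠ p.1)).card ∧
        b ≤ (A.filter (fun q => q.1 = p.1 ∧ q.2 ≠ p.2)).card} with hS
  -- the witness set
  set A : Finset (ℕ × ℕ) := (range (a * m)).image (fun s => (s % n, s / a)) with hA
  have hApos : ∀ s ∈ range (a * m), 0 < a := by
    intro s hs
    simp only [mem_range] at hs
    rcases Nat.eq_zero_or_pos a with rfl | h
    · simp at hs
    · exact h
  have hAmem : ∀ s, s < a * m → (s % n, s / a) ∈ A := by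
    intro s hs
    exact mem_image.mpr ⟨s, mem_range.mpr hs, rfl⟩
  have hAsub : A ⊆ Finset.range n ×ˢ Finset.range m := by
    intro x hx
    simp only [hA, mem_image, mem_range] at hx
    obtain ⟨s, hs, rfl⟩ := hx
    have hapos : 0 < a := hApos s (mem_range.mpr hs)
    simp only [mem_product, mem_range]
    refine ⟨Nat.mod_lt s (by omega), ?_⟩
    rw [Nat.div_lt_iff_lt_mul hapos, mul_comm m a]
    exact hs
  have hAcard : A.card = a * m := by
    rw [hA, Finset.card_image_of_injOn, card_range]
    intro s hs s' hs' h
    simp only [Finset.coe_range, Set.mem_Iio] at hs hs'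
    have hapos : 0 < a := hApos s (mem_range.mpr hs)
    exact key_inj han hapos (congrArg Prod.fst h) (congrArg Prod.snd h)
  have hmemS : a * m ∈ S := by
    refine ⟨A, hAsub, hAcard, ?_⟩
    rintro ⟨j, i⟩ hp hpA
    simp only [mem_product, mem_range] at hp
    obtain ⟨hj, hi⟩ := hp
    constructor
    · -- row condition
      rcases Nat.eq_zero_or_pos a with rfl | hapos
      · exact Nat.zero_le _
      have hsub : ((range a).image (fun t => ((a * i + t) % n, i))) ⊆
          A.filter (fun q => q.2 = i ∧ q.1 ≠ j) := by
        intro x hx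
        simp only [mem_image, mem_range] at hx
        obtain ⟨t, ht, rfl⟩ := hx
        have hlt : a * i + t < a * m := by
          have h1 : a * (i + 1) ≤ a * m := Nat.mul_le_mul_left a (by omega)
          have h2 : a * (i + 1) = a * i + a := by ring
          omega
        have hdiv : (a * i + t) / a = i := by
          rw [Nat.mul_add_div hapos, Nat.div_eq_of_lt ht]
          omega
        have hin : ((a * i + t) % n, i) ∈ A := by
          have := hAmem (a * i + t) hlt
          rwa [hdiv] at this
        refine mem_filter.mpr ⟨hin, rfl, ?_⟩
        intro hjeq
        apply hpA
        have he : (a * i + t) % n = j := hjeq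
        rwa [he] at hin
      have hcard : ((range a).image (fun t => ((a * i + t) % n, i))).card = a := by
        rw [Finset.card_image_of_injOn, card_range]
        intro t ht t' ht' h
        simp only [Finset.coe_range, Set.mem_Iio] at ht ht'
        have h1 : (a * i + t) % n = (a * i + t') % n := congrArg Prod.fst h
        have hd : ∀ u, u < a → (a * i + u) / a = i := by
          intro u hu; rw [Nat.mul_add_div hapos, Nat.div_eq_of_lt hu]; omega
        have := key_inj han hapos h1 (by rw [hd t ht, hd t' ht'])
        omega
      calc a = _ := hcard.symm
        _ ≤ _ := card_le_card hsub
    · -- column condition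
      rcases Nat.eq_zero_or_pos b with rfl | hbpos
      · exact Nat.zero_le _
      have hapos : 0 < a := by
        rcases Nat.eq_zero_or_pos a with rfl | h
        · simp only [Nat.zero_mul, Nat.le_zero] at hwlog
          exact absurd hwlog (by positivity)
        · exact h
      have hsub : (((range (a * m)).filter (fun s => s % n = j)).image
          (fun s => (j, s / a))) ⊆ A.filter (fun q => q.1 = j ∧ q.2 ≠ i) := by
        intro x hx
        simp only [mem_image, mem_filter, mem_range] at hx
        obtain ⟨s, ⟨hs, hsj⟩, rfl⟩ := hx
        have hin : (j, s / a) ∈ A := by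
          have := hAmem s hs
          rwa [hsj] at this
        refine mem_filter.mpr ⟨hin, rfl, ?_⟩
        intro hieq
        apply hpA
        have he : s / a = i := hieq
        rwa [he] at hin
      have hcard : (((range (a * m)).filter (fun s => s % n = j)).image
          (fun s => (j, s / a))).card
          = ((range (a * m)).filter (fun s => s % n = j)).card := by
        apply Finset.card_image_of_injOn
        intro s hs s' hs' h
        simp only [Finset.coe_filter, Set.mem_setOf_eq, mem_range] at hs hs'
        exact key_inj han hapos (hs.2.trans hs'.2.symm) (congrArg Prod.snd h)
      calc b ≤ ((range (a * m)).filter (fun s => s % n = j)).card :=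
            count_res n b (a * m) j hj hwlog
        _ = _ := hcard.symm
        _ ≤ _ := card_le_card hsub
  -- lower bound
  have hlb : ∀ k ∈ S, a * m ≤ k := by
    rintro k ⟨B, hBsub, hBcard, hBcond⟩
    have hrow : ∀ i ∈ range m, a ≤ (B.filter (fun q => q.2 = i)).card := by
      intro i hi
      simp only [mem_range] at hi
      by_cases hall : ∀ j ∈ range n, ((j : ℕ), i) ∈ B
      · have hsub2 : ((range n).image (fun j => ((j : ℕ), i))) ⊆
            B.filter (fun q => q.2 = i) := by
          intro x hx
          simp only [mem_image, mem_range] at hx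
          obtain ⟨j, hjn, rfl⟩ := hx
          exact mem_filter.mpr ⟨hall j (mem_range.mpr hjn), rfl⟩
        have hc : ((range n).image (fun j => ((j : ℕ), i))).card = n := by
          rw [Finset.card_image_of_injective, card_range]
          intro x y h
          exact (Prod.mk.injEq _ _ _ _).mp h |>.1
        calc a ≤ n := han
          _ = _ := hc.symm
          _ ≤ _ := card_le_card hsub2
      · push_neg at hall
        obtain ⟨j, hjn, hjB⟩ := hall
        have hpgrid : ((j : ℕ), i) ∈ Finset.range n ×ˢ Finset.range m := by
          simp only [mem_product, mem_range]
          exact ⟨mem_range.mp hjn, hi⟩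
        have := (hBcond (j, i) hpgrid hjB).1
        calc a ≤ (B.filter (fun q => q.2 = i ∧ q.1 ≠ j)).card := this
          _ ≤ _ := by
            apply card_le_card
            intro q hq
            simp only [mem_filter] at hq ⊢
            exact ⟨hq.1, hq.2.1⟩
    have hdisj : ((range m : Finset ℕ) : Set ℕ).PairwiseDisjoint
        (fun i => B.filter (fun q => q.2 = i)) := by
      intro i _ j _ hij
      simp only [Function.onFun]
      rw [Finset.disjoint_left]
      intro q hq hq'
      simp only [mem_filter] at hq hq'
      exact hij (hq.2.symm.trans hq'.2)
    have hsum : ∑ i ∈ range m, (B.filter (fun q => q.2 = i)).card ≤ B.card := by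
      rw [← Finset.card_biUnion (fun i hi j hj hij => hdisj hi hj hij)]
      apply card_le_card
      rw [Finset.biUnion_subset]
      intro i _
      exact filter_subset _ _
    calc a * m = ∑ _i ∈ range m, a := by
          rw [Finset.sum_const, card_range, smul_eq_mul, mul_comm]
      _ ≤ ∑ i ∈ range m, (B.filter (fun q => q.2 = i)).card :=
          Finset.sum_le_sum hrow
      _ ≤ B.card := hsum
      _ = k := hBcard
  have h1 : sInf S ≤ a * m := Nat.sInf_le hmemS
  have h2 : a * m ≤ sInf S := hlb _ (Nat.sInf_mem ⟨_, hmemS⟩)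
  rw [max_eq_left hwlog]
  omega
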